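/- Let G_1 and G_2 be finite simple connected graphs on disjoint vertex sets, let v_1 ∈ V(G_1) and v_2 ∈ V(G_2), and let G be the graph obtained from the disjoint union of G_1 and G_2 by adding the edge v_1v_2 (which is a bridge of G). Then cdim(G) = cdim(G_1) + cdim(G_2) + 1 if both G_1 and G_2 force a 𝟙 representation, and cdim(G) = cdim(G_1) + cdim(G_2) otherwise. -/

import Mathlib

open SimpleGraph

namespace ConnDim

open Classical in
/-- The local connectivity `κ(a,b)`: the maximum number of internally vertex-disjoint
`a`-`b` paths, with `κ(a,a) = ∞`. -/
noncomputable def localConn {V : Type*} (G : SimpleGraph V) (a b : V) : ℕ∞ :=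
  if a = b then ⊤
  else sSup {n : ℕ∞ | ∃ Ps : Finset (G.Path a b),
    (∀ p ∈ Ps, ∀ q ∈ Ps, p ≠ q → ∀ x : V,
        x ∈ p.1.support → x ∈ q.1.support → x = a ∨ x = b) ∧
    (Ps.card : ℕ∞) = n}

/-- A set `W` is connectivity resolving if vertices are determined by their
local connectivities to the elements of `W`. -/
def ConnResolving {V : Type*} (G : SimpleGraph V) (W : Set V) : Prop :=
  ∀ u v : V, (∀ w ∈ W, localConn G u w = localConn G v w) → u = v

/-- The connectivity dimension: minimum cardinality of a connectivity resolving set. -/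
noncomputable def cdim {V : Type*} (G : SimpleGraph V) : ℕ :=
  sInf {n : ℕ | ∃ W : Set V, ConnResolving G W ∧ W.ncard = n}

/-- A set `W` is metric resolving if vertices are determined by their distances
to the elements of `W`. -/
def MetricResolving {V : Type*} (G : SimpleGraph V) (W : Set V) : Prop :=
  ∀ u v : V, (∀ w ∈ W, G.dist u w = G.dist v w) → u = v

/-- The metric dimension: minimum cardinality of a metric resolving set. -/
noncomputable def mdim {V : Type*} (G : SimpleGraph V) : ℕ :=
  sInf {n : ℕ | ∃ W : Set V, MetricResolving G W ∧ W.ncard = n}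

/-- `G` forces a `𝟙` representation if every minimum resolving set (basis) `B` admits a
vertex whose local connectivity to every element of `B` equals `1`. -/
def ForcesOne {V : Type*} (G : SimpleGraph V) : Prop :=
  ∀ B : Set V, ConnResolving G B → B.ncard = cdim G →
    ∃ v : V, ∀ b ∈ B, localConn G v b = 1

/-- A cut vertex of a connected graph: its removal disconnects the graph. -/
def IsCutVertex {V : Type*} (G : SimpleGraph V) (v : V) : Prop :=
  G.Connected ∧ ¬ (G.induce {u : V | u ≠ v}).Connected

/-- A block of `G`: a maximal connected subgraph of `G` without a cut vertex of itself. -/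
def IsBlock {V : Type*} (G : SimpleGraph V) (H : G.Subgraph) : Prop :=
  H.coe.Connected ∧ (∀ v, ¬ IsCutVertex H.coe v) ∧
  ∀ H' : G.Subgraph, H ≤ H' → H'.coe.Connected → (∀ v, ¬ IsCutVertex H'.coe v) → H' = H

/-- The number of blocks of `G`. -/
noncomputable def numBlocks {V : Type*} (G : SimpleGraph V) : ℕ :=
  Nat.card {H : G.Subgraph // IsBlock G H}

/-- Two vertices are twins if they have the same neighborhood in the graph with
both of them deleted. -/
def AreTwins {V : Type*} (G : SimpleGraph V) (a b : V) : Prop :=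
  ∀ x : V, x ≠ a → x ≠ b → (G.Adj a x ↔ G.Adj b x)

/-- The threshold graph generated by a binary sequence `L` (`false` = isolated vertex,
`true` = dominating vertex): two vertices are adjacent iff the later one was added
as a dominating vertex. -/
def thresholdGraph (L : List Bool) : SimpleGraph (Fin L.length) :=
  SimpleGraph.fromRel (fun i j => i < j ∧ L.get j = true)

/-- The alternating binary sequence `0,1,0,1,…,0,1` of length `2 * n`. -/
def altList (n : ℕ) : List Bool := (List.replicate n [false, true]).flatten

/-- The join of two graphs on disjoint vertex sets by the bridge `v₁v₂`. -/
def bridgeJoin {V₁ V₂ : Type*} (G₁ : SimpleGraph V₁) (G₂ : SimpleGraph V₂)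
    (v₁ : V₁) (v₂ : V₂) : SimpleGraph (V₁ ⊕ V₂) :=
  G₁.map Function.Embedding.inl ⊔ G₂.map Function.Embedding.inr
    ⊔ SimpleGraph.fromEdgeSet {s(Sum.inl v₁, Sum.inr v₂)}

/-- The graph obtained from `G` by attaching a new leaf (the vertex `none`) to `u`. -/
def attachLeaf {V : Type*} (G : SimpleGraph V) (u : V) : SimpleGraph (Option V) :=
  G.map Function.Embedding.some ⊔ SimpleGraph.fromEdgeSet {s(some u, (none : Option V))}

/-- The chain of `t` triangles (triangle `i` has vertices `inl i.castSucc`, `inl i.succ`,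
`inr (inl i)`), with a leaf `inr (inr ())` attached to the end vertex `inl 0`. -/
def triChain (t : ℕ) : SimpleGraph (Fin (t+1) ⊕ Fin t ⊕ Unit) :=
  SimpleGraph.fromRel (fun a b =>
    match a, b with
    | Sum.inl i, Sum.inl j => (i : ℕ) + 1 = (j : ℕ)
    | Sum.inr (Sum.inl i), Sum.inl j => j = Fin.castSucc i ∨ j = Fin.succ i
    | Sum.inr (Sum.inr _), Sum.inl j => j = 0
    | _, _ => False)



section Aux
open Sum SimpleGraph.Walk

variable {V : Type*} {G : SimpleGraph V} {a b : V}

lemma localConn_self (a : V) : localConn G a a = ⊤ := if_pos rfl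

open Classical in

lemma localConn_of_ne (h : a ≠ b) : localConn G a b =
    sSup {n : ℕ∞ | ∃ Ps : Finset (G.Path a b),
    (∀ p ∈ Ps, ∀ q ∈ Ps, p ≠ q → ∀ x : V,
        x ∈ p.1.support → x ∈ q.1.support → x = a ∨ x = b) ∧
    (Ps.card : ℕ∞) = n} := if_neg h

lemma localConn_ne_top [Fintype V] (h : a ≠ b) : localConn G a b ≠ ⊤ := by
  classical
  rw [localConn_of_ne h]
  have hb : sSup {n : ℕ∞ | ∃ Ps : Finset (G.Path a b),
      (∀ p ∈ Ps, ∀ q ∈ Ps, p ≠ q → ∀ x : V,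
        x ∈ p.1.support → x ∈ q.1.support → x = a ∨ x = b) ∧
      (Ps.card : ℕ∞) = n} ≤ (Fintype.card (G.Path a b) : ℕ∞) := by
    apply sSup_le
    rintro n ⟨Ps, -, rfl⟩
    exact_mod_cast Nat.cast_le.mpr (Finset.card_le_univ Ps)
  exact fun hc => absurd (hc ▸ hb) (by simp)

lemma localConn_eq_top_iff [Fintype V] : localConn G a b = ⊤ ↔ a = b :=
  ⟨fun h => by by_contra hne; exact localConn_ne_top hne h, fun h => h ▸ localConn_self a⟩

lemma localConn_comm (a b : V) : localConn G a b = localConn G b a := by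
  classical
  rcases eq_or_ne a b with rfl | h
  · rfl
  · rw [localConn_of_ne h, localConn_of_ne h.symm]
    congr 1
    ext n
    constructor
    all_goals
      rintro ⟨Ps, hd, rfl⟩
      refine ⟨Ps.map ⟨fun p => ⟨p.1.reverse, p.2.reverse⟩, fun p q hpq => ?_⟩, ?_, by simp⟩
      · apply Subtype.ext
        have := congrArg (fun r => (Subtype.val r).reverse) hpq
        simpa using this
      · simp only [Finset.mem_map, Function.Embedding.coeFn_mk]
        rintro p ⟨p₀, hp₀, rfl⟩ q ⟨q₀, hq₀, rfl⟩ hne x hx hy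
        change x ∈ p₀.1.reverse.support at hx
        change x ∈ q₀.1.reverse.support at hy
        simp only [Walk.support_reverse, List.mem_reverse] at hx hy
        have hne₀ : p₀ ≠ q₀ := fun hh => hne (by rw [hh])
        exact (hd p₀ hp₀ q₀ hq₀ hne₀ x hx hy).symm

lemma localConn_eq_of_equiv {α β : Type*} {H : SimpleGraph α} {H' : SimpleGraph β}
    {a b : α} (f : α → β) (hf : Function.Injective f)
    (e : H.Path a b ≃ H'.Path (f a) (f b))
    (hsupp : ∀ p : H.Path a b, (e p).1.support = p.1.support.map f) :
    localConn H a b = localConn H' (f a) (f b) := by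
  classical
  rcases eq_or_ne a b with rfl | h
  · rw [localConn, if_pos rfl, localConn, if_pos rfl]
  · rw [localConn_of_ne h, localConn_of_ne (fun hh => h (hf hh))]
    congr 1
    ext n
    constructor
    · rintro ⟨Ps, hd, rfl⟩
      refine ⟨Ps.map e.toEmbedding, ?_, by simp⟩
      simp only [Finset.mem_map, Equiv.coe_toEmbedding]
      rintro p ⟨p₀, hp₀, rfl⟩ q ⟨q₀, hq₀, rfl⟩ hne x hx hy
      rw [hsupp, List.mem_map] at hx hy
      obtain ⟨x₀, hx₀, rfl⟩ := hx
      obtain ⟨y₀, hy₀, hxy⟩ := hy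
      have hxeq : y₀ = x₀ := hf hxy
      subst hxeq
      have hne₀ : p₀ ≠ q₀ := fun hh => hne (by rw [hh])
      rcases hd p₀ hp₀ q₀ hq₀ hne₀ y₀ hx₀ hy₀ with h' | h'
      · exact Or.inl (by rw [h'])
      · exact Or.inr (by rw [h'])
    · rintro ⟨Ps, hd, rfl⟩
      refine ⟨Ps.map e.symm.toEmbedding, ?_, by simp⟩
      simp only [Finset.mem_map, Equiv.coe_toEmbedding]
      rintro p ⟨p₀, hp₀, rfl⟩ q ⟨q₀, hq₀, rfl⟩ hne x hx hy
      have hsx : f x ∈ p₀.1.support := by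
        have := hsupp (e.symm p₀); rw [Equiv.apply_symm_apply] at this
        rw [this]; exact List.mem_map_of_mem hx
      have hsy : f x ∈ q₀.1.support := by
        have := hsupp (e.symm q₀); rw [Equiv.apply_symm_apply] at this
        rw [this]; exact List.mem_map_of_mem hy
      have hne₀ : p₀ ≠ q₀ := fun hh => hne (by rw [hh])
      rcases hd p₀ hp₀ q₀ hq₀ hne₀ (f x) hsx hsy with hh | hh
      · exact Or.inl (hf hh)
      · exact Or.inr (hf hh)

end Aux

section Bridge
open Sum SimpleGraph.Walk

variable {V₁ V₂ : Type*} {G₁ : SimpleGraph V₁} {G₂ : SimpleGraph V₂} {v₁ : V₁} {v₂ : V₂}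
local notation "G" => bridgeJoin G₁ G₂ v₁ v₂

@[simp] lemma adj_inl_inl {a b : V₁} : (G).Adj (inl a) (inl b) ↔ G₁.Adj a b := by
  simp [bridgeJoin, Sym2.eq, Sym2.rel_iff']
@[simp] lemma adj_inr_inr {a b : V₂} : (G).Adj (inr a) (inr b) ↔ G₂.Adj a b := by
  simp [bridgeJoin, Sym2.eq, Sym2.rel_iff']
@[simp] lemma adj_inl_inr {a : V₁} {b : V₂} : (G).Adj (inl a) (inr b) ↔ a = v₁ ∧ b = v₂ := by
  simp [bridgeJoin, Sym2.eq, Sym2.rel_iff', and_comm]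
@[simp] lemma adj_inr_inl {a : V₂} {b : V₁} : (G).Adj (inr a) (inl b) ↔ a = v₂ ∧ b = v₁ := by
  simp [bridgeJoin, Sym2.eq, Sym2.rel_iff', and_comm]

def hom₁ : G₁ →g (G) := ⟨inl, fun h => adj_inl_inl.mpr h⟩
def hom₂ : G₂ →g (G) := ⟨inr, fun h => adj_inr_inr.mpr h⟩

lemma mem_of_cross : ∀ {x y : V₁ ⊕ V₂} (p : (G).Walk x y),
    x ∈ Set.range (inl : V₁ → V₁ ⊕ V₂) → y ∈ Set.range (inr : V₂ → V₁ ⊕ V₂) →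
    inl v₁ ∈ p.support ∧ inr v₂ ∈ p.support := by
  intro x y p
  induction p with
  | nil =>
    rintro ⟨a, rfl⟩ ⟨b, hb⟩
    exact absurd hb (by simp)
  | @cons x z y h q ih =>
    rintro ⟨a, rfl⟩ hy
    rcases z with c | c
    · have := ih ⟨c, rfl⟩ hy
      exact ⟨List.mem_cons_of_mem _ this.1, List.mem_cons_of_mem _ this.2⟩
    · obtain ⟨rfl, rfl⟩ := adj_inl_inr.mp h
      exact ⟨List.mem_cons_self, List.mem_cons_of_mem _ q.start_mem_support⟩

lemma support_subset_inl : ∀ {x y : V₁ ⊕ V₂} (p : (G).Walk x y), p.IsPath →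
    ∀ a b, x = inl a → y = inl b → ∀ s ∈ p.support, s ∈ Set.range (inl : V₁ → V₁ ⊕ V₂) := by
  intro x y p
  induction p with
  | nil =>
    rintro _ a b rfl _ s hs
    simp only [support_nil, List.mem_singleton] at hs
    exact ⟨a, hs.symm⟩
  | @cons x z y h q ih =>
    rintro hp a b rfl rfl s hs
    simp only [support_cons, List.mem_cons] at hs
    rcases z with c | c
    · rcases hs with rfl | hs
      · exact ⟨a, rfl⟩
      · exact ih hp.of_cons c b rfl rfl s hs
    · exfalso
      obtain ⟨ha, hc⟩ := adj_inl_inr.mp h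
      have hmem := (mem_of_cross q.reverse ⟨b, rfl⟩ ⟨c, rfl⟩).1
      rw [support_reverse, List.mem_reverse] at hmem
      apply ((cons_isPath_iff h q).mp hp).2
      rw [ha]; exact hmem

lemma support_subset_inr : ∀ {x y : V₁ ⊕ V₂} (p : (G).Walk x y), p.IsPath →
    ∀ a b, x = inr a → y = inr b → ∀ s ∈ p.support, s ∈ Set.range (inr : V₂ → V₁ ⊕ V₂) := by
  intro x y p
  induction p with
  | nil =>
    rintro _ a b rfl _ s hs
    simp only [support_nil, List.mem_singleton] at hs
    exact ⟨a, hs.symm⟩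
  | @cons x z y h q ih =>
    rintro hp a b rfl rfl s hs
    simp only [support_cons, List.mem_cons] at hs
    rcases z with c | c
    · exfalso
      obtain ⟨ha, hc⟩ := adj_inr_inl.mp h
      have hmem := (mem_of_cross q ⟨c, rfl⟩ ⟨b, rfl⟩).2
      apply ((cons_isPath_iff h q).mp hp).2
      rw [ha]; exact hmem
    · rcases hs with rfl | hs
      · exact ⟨a, rfl⟩
      · exact ih hp.of_cons c b rfl rfl s hs

lemma exists_lift₁ : ∀ {x y : V₁ ⊕ V₂} (q : (G).Walk x y),
    (∀ s ∈ q.support, s ∈ Set.range (inl : V₁ → V₁ ⊕ V₂)) →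
    ∀ a b (ha : x = inl a) (hb : y = inl b), ∃ p : G₁.Walk a b, p.map hom₁ = q.copy ha hb := by
  intro x y q
  induction q with
  | nil =>
    rintro _ a b rfl hb
    obtain rfl : a = b := inl_injective hb
    exact ⟨.nil, by simp; rfl⟩
  | @cons x z y h q ih =>
    rintro hs a b rfl rfl
    obtain ⟨c, rfl⟩ := hs z (by simp)
    obtain ⟨p, hp⟩ := ih (fun s hsub => hs s (List.mem_cons_of_mem _ hsub)) c b rfl rfl
    rw [Walk.copy_rfl_rfl] at hp
    exact ⟨.cons (adj_inl_inl.mp h) p, by rw [Walk.copy_rfl_rfl, map_cons, hp]; rfl⟩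

lemma exists_lift₂ : ∀ {x y : V₁ ⊕ V₂} (q : (G).Walk x y),
    (∀ s ∈ q.support, s ∈ Set.range (inr : V₂ → V₁ ⊕ V₂)) →
    ∀ a b (ha : x = inr a) (hb : y = inr b), ∃ p : G₂.Walk a b, p.map hom₂ = q.copy ha hb := by
  intro x y q
  induction q with
  | nil =>
    rintro _ a b rfl hb
    obtain rfl : a = b := inr_injective hb
    exact ⟨.nil, by simp; rfl⟩
  | @cons x z y h q ih =>
    rintro hs a b rfl rfl
    obtain ⟨c, rfl⟩ := hs z (by simp)
    obtain ⟨p, hp⟩ := ih (fun s hsub => hs s (List.mem_cons_of_mem _ hsub)) c b rfl rfl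
    rw [Walk.copy_rfl_rfl] at hp
    exact ⟨.cons (adj_inr_inr.mp h) p, by rw [Walk.copy_rfl_rfl, map_cons, hp]; rfl⟩

lemma hom₁_injective : Function.Injective (hom₁ : G₁ →g (G)) := fun _ _ h => inl_injective h

lemma hom₂_injective : Function.Injective (hom₂ : G₂ →g (G)) := fun _ _ h => inr_injective h

lemma path_map_bijective₁ (u w : V₁) :
    Function.Bijective (fun p : G₁.Path u w => p.map (hom₁ : G₁ →g (G)) hom₁_injective) := by
  constructor
  · exact Path.map_injective hom₁_injective u w
  · intro q
    have hsub := support_subset_inl q.1 q.2 u w rfl rfl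
    obtain ⟨p₀, hp₀⟩ := exists_lift₁ q.1 hsub u w rfl rfl
    erw [Walk.copy_rfl_rfl] at hp₀
    have hpath : p₀.IsPath := by
      rw [← Walk.map_isPath_iff_of_injective (f := (hom₁ : G₁ →g (G))) hom₁_injective]
      rw [hp₀]; exact q.2
    exact ⟨⟨p₀, hpath⟩, Subtype.ext hp₀⟩

lemma localConn_inl (u w : V₁) : localConn G₁ u w = localConn (G) (inl u) (inl w) := by
  refine localConn_eq_of_equiv (Sum.inl) inl_injective
    (Equiv.ofBijective _ (path_map_bijective₁ u w)) ?_
  intro p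
  exact Walk.support_map _ p.1

lemma path_map_bijective₂ (u w : V₂) :
    Function.Bijective (fun p : G₂.Path u w => p.map (hom₂ : G₂ →g (G)) hom₂_injective) := by
  constructor
  · exact Path.map_injective hom₂_injective u w
  · intro q
    have hsub := support_subset_inr q.1 q.2 u w rfl rfl
    obtain ⟨p₀, hp₀⟩ := exists_lift₂ q.1 hsub u w rfl rfl
    erw [Walk.copy_rfl_rfl] at hp₀
    have hpath : p₀.IsPath := by
      rw [← Walk.map_isPath_iff_of_injective (f := (hom₂ : G₂ →g (G))) hom₂_injective]
      rw [hp₀]; exact q.2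
    exact ⟨⟨p₀, hpath⟩, Subtype.ext hp₀⟩

lemma localConn_inr (u w : V₂) : localConn G₂ u w = localConn (G) (inr u) (inr w) := by
  refine localConn_eq_of_equiv (Sum.inr) inr_injective
    (Equiv.ofBijective _ (path_map_bijective₂ u w)) ?_
  intro p
  exact Walk.support_map _ p.1

lemma exists_path_cross (h₁ : G₁.Connected) (h₂ : G₂.Connected) (u : V₁) (w : V₂) :
    Nonempty ((G).Path (inl u) (inr w)) := by
  classical
  have r : (G).Reachable (inl u) (inr w) :=
    ((h₁.preconnected u v₁).map hom₁).trans
      (((adj_inl_inr.mpr ⟨rfl, rfl⟩ : (G).Adj (inl v₁) (inr v₂)).reachable).trans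
        ((h₂.preconnected v₂ w).map hom₂))
  obtain ⟨wlk⟩ := r
  exact ⟨wlk.toPath⟩

lemma path_eq_bridge (p : (G).Path (inl v₁) (inr v₂)) :
    p.1 = Walk.cons (adj_inl_inr.mpr ⟨rfl, rfl⟩) Walk.nil := by
  obtain ⟨z, h, q, hq⟩ := Walk.exists_eq_cons_of_ne (by simp) p.1
  have hp := p.2
  rw [hq] at hp
  rcases z with c | c
  · exfalso
    have := (mem_of_cross q ⟨c, rfl⟩ ⟨v₂, rfl⟩).1
    exact ((cons_isPath_iff h q).mp hp).2 this
  · obtain ⟨-, rfl⟩ := adj_inl_inr.mp h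
    have : q = Walk.nil := Walk.isPath_iff_eq_nil.mp hp.of_cons
    rw [hq, this]

lemma localConn_cross (h₁ : G₁.Connected) (h₂ : G₂.Connected) (u : V₁) (w : V₂) :
    localConn (G) (inl u) (inr w) = 1 := by
  classical
  rw [localConn_of_ne (by simp)]
  apply le_antisymm
  · apply sSup_le
    rintro n ⟨Ps, hd, rfl⟩
    have hcard : Ps.card ≤ 1 := by
      rw [Finset.card_le_one]
      intro p hp q hq
      by_contra hne
      have kp := mem_of_cross p.1 ⟨u, rfl⟩ ⟨w, rfl⟩
      have kq := mem_of_cross q.1 ⟨u, rfl⟩ ⟨w, rfl⟩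
      rcases eq_or_ne u v₁ with rfl | hu
      · rcases eq_or_ne w v₂ with rfl | hw
        · exact hne (Subtype.ext ((path_eq_bridge p).trans (path_eq_bridge q).symm))
        · rcases hd p hp q hq hne (inr v₂) kp.2 kq.2 with hx | hx
          · simp at hx
          · exact hw (inr_injective hx.symm)
      · rcases hd p hp q hq hne (inl v₁) kp.1 kq.1 with hx | hx
        · exact hu (inl_injective hx.symm)
        · simp at hx
    exact_mod_cast hcard
  · obtain ⟨p⟩ := exists_path_cross h₁ h₂ u w
    apply le_sSup
    refine ⟨{p}, ?_, by simp⟩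
    intro p' hp' q' hq' hne
    simp only [Finset.mem_singleton] at hp' hq'
    exact absurd (hp'.trans hq'.symm) hne

lemma localConn_cross' (h₁ : G₁.Connected) (h₂ : G₂.Connected) (u : V₁) (w : V₂) :
    localConn (G) (inr w) (inl u) = 1 := by
  rw [localConn_comm]; exact localConn_cross h₁ h₂ u w

end Bridge


section Comb
open Sum

lemma exists_basis {V : Type*} [Fintype V] (G : SimpleGraph V) :
    ∃ B : Set V, ConnResolving G B ∧ B.ncard = cdim G := by
  have hne : {n : ℕ | ∃ W : Set V, ConnResolving G W ∧ W.ncard = n}.Nonempty := by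
    refine ⟨(Set.univ : Set V).ncard, Set.univ, ?_, rfl⟩
    intro u v h
    have := h u (Set.mem_univ u)
    rw [localConn_self] at this
    exact (localConn_eq_top_iff.mp this.symm).symm
  exact Nat.sInf_mem hne

lemma cdim_le {V : Type*} {G : SimpleGraph V} {W : Set V} (h : ConnResolving G W) :
    cdim G ≤ W.ncard :=
  Nat.sInf_le ⟨W, h, rfl⟩

lemma augment {V : Type*} [Fintype V] {H : SimpleGraph V} {B : Set V} (r : ConnResolving H B)
    (hb : ∃ u, ∀ w ∈ B, localConn H u w = 1) :
    ∃ B', ConnResolving H B' ∧ B'.ncard = B.ncard + 1 ∧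
      ¬∃ u, ∀ w ∈ B', localConn H u w = 1 := by
  obtain ⟨u, hu⟩ := hb
  have htop : ((⊤ : ℕ∞) ≠ 1) := by simp
  have hnotmem : u ∉ B := fun hmem => by
    have := hu u hmem; rw [localConn_self] at this; exact htop this
  refine ⟨insert u B, ?_, ?_, ?_⟩
  · intro x y hxy; exact r x y (fun w hw => hxy w (Set.mem_insert_of_mem _ hw))
  · rw [Set.ncard_insert_of_notMem hnotmem (Set.toFinite _)]
  · rintro ⟨z, hz⟩
    have hz' : z = u := r z u (fun w hw =>
      (hz w (Set.mem_insert_of_mem _ hw)).trans (hu w hw).symm)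
    subst hz'
    have := hz z (Set.mem_insert _ _)
    rw [localConn_self] at this; exact htop this

variable {V₁ V₂ : Type*} [Fintype V₁] [Fintype V₂]
  {G₁ : SimpleGraph V₁} {G₂ : SimpleGraph V₂} {v₁ : V₁} {v₂ : V₂}
local notation "G" => bridgeJoin G₁ G₂ v₁ v₂

lemma ncard_split (W : Set (V₁ ⊕ V₂)) :
    W.ncard = (inl ⁻¹' W).ncard + (inr ⁻¹' W).ncard := by
  have hW : W = inl '' (inl ⁻¹' W) ∪ inr '' (inr ⁻¹' W) := by
    ext x; cases x <;> simp
  rw [hW, Set.ncard_union_eq ?disj (Set.toFinite _) (Set.toFinite _),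
    Set.ncard_image_of_injective _ inl_injective,
    Set.ncard_image_of_injective _ inr_injective, ← hW]
  case disj =>
    rw [Set.disjoint_left]
    rintro x ⟨a, -, rfl⟩ ⟨b, -, hb⟩
    exact absurd hb (by simp)

lemma preimage_inl_union (B₁ : Set V₁) (B₂ : Set V₂) :
    inl ⁻¹' ((inl '' B₁ ∪ inr '' B₂ : Set (V₁ ⊕ V₂))) = B₁ := by
  ext a; simp

lemma preimage_inr_union (B₁ : Set V₁) (B₂ : Set V₂) :
    inr ⁻¹' ((inl '' B₁ ∪ inr '' B₂ : Set (V₁ ⊕ V₂))) = B₂ := by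
  ext a; simp

lemma resolves_iff (h₁ : G₁.Connected) (h₂ : G₂.Connected) (W : Set (V₁ ⊕ V₂)) :
    ConnResolving (G) W ↔
      ConnResolving G₁ (inl ⁻¹' W) ∧ ConnResolving G₂ (inr ⁻¹' W) ∧
      ¬((∃ u, ∀ w ∈ inl ⁻¹' W, localConn G₁ u w = 1) ∧
        (∃ u, ∀ w ∈ inr ⁻¹' W, localConn G₂ u w = 1)) := by
  constructor
  · intro hR
    refine ⟨?_, ?_, ?_⟩
    · intro u v huv
      apply inl_injective (α := V₁) (β := V₂)
      apply hR
      intro x hx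
      rcases x with w | w
      · rw [← localConn_inl, ← localConn_inl]; exact huv w hx
      · rw [localConn_cross h₁ h₂, localConn_cross h₁ h₂]
    · intro u v huv
      apply inr_injective (α := V₁) (β := V₂)
      apply hR
      intro x hx
      rcases x with w | w
      · rw [localConn_cross' h₁ h₂, localConn_cross' h₁ h₂]
      · rw [← localConn_inr, ← localConn_inr]; exact huv w hx
    · rintro ⟨⟨u, hu⟩, ⟨v, hv⟩⟩
      have : (inl u : V₁ ⊕ V₂) = inr v := by
        apply hR
        intro x hx
        rcases x with w | w
        · rw [← localConn_inl, hu w hx, localConn_cross' h₁ h₂]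
        · rw [← localConn_inr, hv w hx, localConn_cross h₁ h₂]
      exact absurd this (by simp)
  · rintro ⟨r₁, r₂, hnb⟩ u v huv
    rcases u with a | a <;> rcases v with b | b
    · have : a = b := by
        apply r₁
        intro w hw
        have := huv (inl w) hw
        rwa [← localConn_inl, ← localConn_inl] at this
      rw [this]
    · exfalso
      apply hnb
      constructor
      · refine ⟨a, fun w hw => ?_⟩
        have := huv (inl w) hw
        rwa [← localConn_inl, localConn_cross' h₁ h₂] at this
      · refine ⟨b, fun w hw => ?_⟩
        have := huv (inr w) hw
        rw [localConn_cross h₁ h₂, ← localConn_inr] at this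
        exact this.symm
    · exfalso
      apply hnb
      constructor
      · refine ⟨b, fun w hw => ?_⟩
        have := huv (inl w) hw
        rw [localConn_cross' h₁ h₂, ← localConn_inl] at this
        exact this.symm
      · refine ⟨a, fun w hw => ?_⟩
        have := huv (inr w) hw
        rwa [← localConn_inr, localConn_cross h₁ h₂] at this
    · have : a = b := by
        apply r₂
        intro w hw
        have := huv (inr w) hw
        rwa [← localConn_inr, ← localConn_inr] at this
      rw [this]

lemma lower_bound (h₁ : G₁.Connected) (h₂ : G₂.Connected) {W : Set (V₁ ⊕ V₂)}
    (hW : ConnResolving (G) W) : cdim G₁ + cdim G₂ ≤ W.ncard := by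
  obtain ⟨r₁, r₂, -⟩ := (resolves_iff h₁ h₂ W).mp hW
  rw [ncard_split W]
  exact Nat.add_le_add (cdim_le r₁) (cdim_le r₂)

lemma construct (h₁ : G₁.Connected) (h₂ : G₂.Connected) {B₁ : Set V₁} {B₂ : Set V₂}
    (r₁ : ConnResolving G₁ B₁) (r₂ : ConnResolving G₂ B₂)
    (h : ¬(∃ u, ∀ w ∈ B₁, localConn G₁ u w = 1) ∨ ¬(∃ u, ∀ w ∈ B₂, localConn G₂ u w = 1)) :
    cdim (G) ≤ B₁.ncard + B₂.ncard := by
  have key : ConnResolving (G) (inl '' B₁ ∪ inr '' B₂) := by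
    rw [resolves_iff h₁ h₂, preimage_inl_union, preimage_inr_union]
    exact ⟨r₁, r₂, fun hh => h.elim (fun h' => h' hh.1) (fun h' => h' hh.2)⟩
  calc cdim (G) ≤ _ := cdim_le key
    _ = B₁.ncard + B₂.ncard := by
        rw [ncard_split, preimage_inl_union, preimage_inr_union]

end Comb

/-- joining two connected graphs by a bridge `v₁v₂` gives
`cdim G = cdim G₁ + cdim G₂ + 1` if both force a `𝟙` representation, and
`cdim G = cdim G₁ + cdim G₂` otherwise. -/
theorem stmt14 {V₁ V₂ : Type*} [Fintype V₁] [Fintype V₂]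
    (G₁ : SimpleGraph V₁) (G₂ : SimpleGraph V₂)
    (h₁ : G₁.Connected) (h₂ : G₂.Connected) (v₁ : V₁) (v₂ : V₂) :
    (ForcesOne G₁ ∧ ForcesOne G₂ →
      cdim (bridgeJoin G₁ G₂ v₁ v₂) = cdim G₁ + cdim G₂ + 1) ∧
    (¬ (ForcesOne G₁ ∧ ForcesOne G₂) →
      cdim (bridgeJoin G₁ G₂ v₁ v₂) = cdim G₁ + cdim G₂) := by
  constructor
  · rintro ⟨F₁, F₂⟩
    obtain ⟨B₁, r₁, hc₁⟩ := exists_basis G₁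
    obtain ⟨B₂, r₂, hc₂⟩ := exists_basis G₂
    apply le_antisymm
    · obtain ⟨B₁', r₁', hc₁', hnb₁⟩ := augment r₁ (F₁ B₁ r₁ hc₁)
      have := construct (v₁ := v₁) (v₂ := v₂) h₁ h₂ r₁' r₂ (Or.inl hnb₁)
      omega
    · obtain ⟨B, rB, hcB⟩ := exists_basis (bridgeJoin G₁ G₂ v₁ v₂)
      obtain ⟨rb₁, rb₂, hnb⟩ := (resolves_iff h₁ h₂ B).mp rB
      have e := ncard_split B
      have l₁ : cdim G₁ ≤ (Sum.inl ⁻¹' B).ncard := cdim_le rb₁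
      have l₂ : cdim G₂ ≤ (Sum.inr ⁻¹' B).ncard := cdim_le rb₂
      by_contra hlt
      push_neg at hlt
      have h₁' : (Sum.inl ⁻¹' B).ncard = cdim G₁ := by omega
      have h₂' : (Sum.inr ⁻¹' B).ncard = cdim G₂ := by omega
      exact hnb ⟨F₁ _ rb₁ h₁', F₂ _ rb₂ h₂'⟩
  · intro hnF
    obtain ⟨B₁, r₁, hc₁⟩ := exists_basis G₁
    obtain ⟨B₂, r₂, hc₂⟩ := exists_basis G₂
    apply le_antisymm
    · rw [not_and_or] at hnF
      rcases hnF with hF | hF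
      · rw [ForcesOne] at hF; push_neg at hF
        obtain ⟨B, rB, hcB, hnb⟩ := hF
        have hnb' : ¬∃ u, ∀ w ∈ B, localConn G₁ u w = 1 := by
          rintro ⟨u, hu⟩
          obtain ⟨b, hbB, hne⟩ := hnb u
          exact hne (hu b hbB)
        have := construct (v₁ := v₁) (v₂ := v₂) h₁ h₂ rB r₂ (Or.inl hnb')
        omega
      · rw [ForcesOne] at hF; push_neg at hF
        obtain ⟨B, rB, hcB, hnb⟩ := hF
        have hnb' : ¬∃ u, ∀ w ∈ B, localConn G₂ u w = 1 := by
          rintro ⟨u, hu⟩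
          obtain ⟨b, hbB, hne⟩ := hnb u
          exact hne (hu b hbB)
        have := construct (v₁ := v₁) (v₂ := v₂) h₁ h₂ r₁ rB (Or.inr hnb')
        omega
    · obtain ⟨B, rB, hcB⟩ := exists_basis (bridgeJoin G₁ G₂ v₁ v₂)
      have := lower_bound h₁ h₂ rB
      omega


end ConnDim
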